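/- Let w, h ≥ 1 be natural numbers, let 0 < ε ≤ 1/(16·w³·h³), and let p and q be two distinct points of the grid {0, 1, …, w} × {0, 1, …, h} ⊆ ℝ². Let p' and q' be points of ℝ² lying in the ε-squares centered at p and q, respectively (i.e., ‖p' − p‖_∞ ≤ ε/2 and ‖q' − q‖_∞ ≤ ε/2). Then for every grid point r ∈ {0, 1, …, w} × {0, 1, …, h} that does not lie on the line through p and q, and for every point r' in the ε-square centered at r (i.e., ‖r' − r‖_∞ ≤ ε/2), the orientation of the triple (p, q, r) equals the orientation of the triple (p', q', r'); in particular (p', q', r') are not collinear. Here the orientation of a triple (a, b, c) of points of ℝ² is the sign of the determinant det(b − a, c − a). -/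

import Mathlib

/-- The set of integer grid points `{0, …, w} × {0, …, h}` viewed inside `ℝ²`. -/
def gridPts (w h : ℕ) : Set (ℝ × ℝ) :=
  {p | ∃ a b : ℕ, a ≤ w ∧ b ≤ h ∧ p = ((a : ℝ), (b : ℝ))}

/-- The affine line through the two points `a` and `b` of `ℝ²`. -/
def lineThrough (a b : ℝ × ℝ) : Set (ℝ × ℝ) :=
  {x | ∃ t : ℝ, x = a + t • (b - a)}

/-- The determinant `det (b - a, c - a)` whose sign is the orientation of `(a, b, c)`. -/
def orientDet (a b c : ℝ × ℝ) : ℝ :=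
  (b.1 - a.1) * (c.2 - a.2) - (b.2 - a.2) * (c.1 - a.1)

/-- Orientation of the triple `(a, b, c)`: the sign of `det (b - a, c - a)`. -/
noncomputable def orient (a b c : ℝ × ℝ) : ℝ := Real.sign (orientDet a b c)

lemma prod_pert_bound (X Y X' Y' W H ε : ℝ) (hX : |X| ≤ W) (hY : |Y| ≤ H)
    (hX' : |X' - X| ≤ ε) (hY' : |Y' - Y| ≤ ε) (hε : 0 ≤ ε) (hε1 : ε ≤ 1) :
    |X' * Y' - X * Y| ≤ (W + H + 1) * ε := by
  have h1 : X' * Y' - X * Y = X * (Y' - Y) + Y * (X' - X) + (X' - X) * (Y' - Y) := by ring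
  rw [h1]
  have h2 := abs_add_three (X * (Y' - Y)) (Y * (X' - X)) ((X' - X) * (Y' - Y))
  rw [abs_mul, abs_mul, abs_mul] at h2
  nlinarith [abs_nonneg X, abs_nonneg Y, abs_nonneg (X' - X), abs_nonneg (Y' - Y),
    mul_le_mul hX hY' (abs_nonneg _) (le_trans (abs_nonneg X) hX),
    mul_le_mul hY hX' (abs_nonneg _) (le_trans (abs_nonneg Y) hY),
    mul_le_mul hX' hY' (abs_nonneg _) hε]

/-- If a triple has zero determinant and the first two points are distinct, the third
lies on the line through them. -/
lemma mem_line_of_det_zero (p q r : ℝ × ℝ) (hpq : p ≠ q) (hd : orientDet p q r = 0) :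
    r ∈ lineThrough p q := by
  unfold orientDet at hd
  by_cases h1 : q.1 = p.1
  · have h2 : q.2 ≠ p.2 := by
      intro h2; exact hpq (Prod.ext h1.symm h2.symm)
    refine ⟨(r.2 - p.2) / (q.2 - p.2), ?_⟩
    have hne : q.2 - p.2 ≠ 0 := sub_ne_zero.mpr h2
    have hr1 : r.1 = p.1 := by
      have : (q.2 - p.2) * (r.1 - p.1) = 0 := by rw [h1] at hd; linarith [hd]
      rcases mul_eq_zero.mp this with h | h
      · exact absurd h hne
      · linarith [sub_eq_zero.mp h]
    ext
    · simp [hr1, h1]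
    · simp only [Prod.snd_add, Prod.smul_snd, Prod.snd_sub, smul_eq_mul]
      field_simp
      ring
  · refine ⟨(r.1 - p.1) / (q.1 - p.1), ?_⟩
    have hne : q.1 - p.1 ≠ 0 := sub_ne_zero.mpr h1
    ext
    · simp only [Prod.fst_add, Prod.smul_fst, Prod.fst_sub, smul_eq_mul]
      field_simp
      ring
    · simp only [Prod.snd_add, Prod.smul_snd, Prod.snd_sub, smul_eq_mul]
      field_simp
      nlinarith [hd]

lemma coord_bound (x y n : ℕ) (hx : x ≤ n) (hy : y ≤ n) : |(x : ℝ) - (y : ℝ)| ≤ (n : ℝ) := by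
  have hx' : (x : ℝ) ≤ n := by exact_mod_cast hx
  have hy' : (y : ℝ) ≤ n := by exact_mod_cast hy
  have hx0 : (0 : ℝ) ≤ x := x.cast_nonneg
  have hy0 : (0 : ℝ) ≤ y := y.cast_nonneg
  rw [abs_le]
  constructor <;> linarith

set_option maxHeartbeats 2000000 in
theorem stmt10 (w h : ℕ) (hw : 1 ≤ w) (hh : 1 ≤ h)
    (ε : ℝ) (hε : 0 < ε) (hεle : ε ≤ 1 / (16 * (w : ℝ) ^ 3 * (h : ℝ) ^ 3))
    (p q : ℝ × ℝ) (hp : p ∈ gridPts w h) (hq : q ∈ gridPts w h) (hpq : p ≠ q)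
    (p' q' : ℝ × ℝ)
    (hp' : |p'.1 - p.1| ≤ ε / 2 ∧ |p'.2 - p.2| ≤ ε / 2)
    (hq' : |q'.1 - q.1| ≤ ε / 2 ∧ |q'.2 - q.2| ≤ ε / 2)
    (r : ℝ × ℝ) (hr : r ∈ gridPts w h) (hrl : r ∉ lineThrough p q)
    (r' : ℝ × ℝ) (hr' : |r'.1 - r.1| ≤ ε / 2 ∧ |r'.2 - r.2| ≤ ε / 2) :
    orient p q r = orient p' q' r' ∧ orientDet p' q' r' ≠ 0 := by
  obtain ⟨a1, a2, ha1, ha2, hpe⟩ := hp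
  obtain ⟨b1, b2, hb1, hb2, hqe⟩ := hq
  obtain ⟨c1, c2, hc1, hc2, hre⟩ := hr
  set W := (w : ℝ) with hW
  set H := (h : ℝ) with hH
  have hw1 : (1 : ℝ) ≤ W := by rw [hW]; exact_mod_cast hw
  have hh1 : (1 : ℝ) ≤ H := by rw [hH]; exact_mod_cast hh
  have hw3 : (1 : ℝ) ≤ W ^ 3 := one_le_pow₀ hw1
  have hh3 : (1 : ℝ) ≤ H ^ 3 := one_le_pow₀ hh1
  have hWH : (1 : ℝ) ≤ 16 * W ^ 3 * H ^ 3 := by nlinarith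
  have hε1 : ε ≤ 1 := le_trans hεle (by rw [div_le_one (by linarith)]; exact hWH)
  -- the unperturbed determinant is a nonzero integer
  set D := orientDet p q r with hD
  have hDint : D = ((((b1 : ℤ) - a1) * ((c2 : ℤ) - a2)
      - ((b2 : ℤ) - a2) * ((c1 : ℤ) - a1) : ℤ) : ℝ) := by
    simp only [hD, orientDet, hpe, hqe, hre]
    push_cast
    ring
  have hDne : D ≠ 0 := fun h0 => hrl (mem_line_of_det_zero p q r hpq h0)
  have hDabs : (1 : ℝ) ≤ |D| := by
    rw [hDint, ← Int.cast_abs]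
    have hz : ((((b1 : ℤ) - a1) * ((c2 : ℤ) - a2)
        - ((b2 : ℤ) - a2) * ((c1 : ℤ) - a1) : ℤ)) ≠ 0 := by
      intro h0; apply hDne; rw [hDint, h0]; simp
    exact_mod_cast Int.one_le_abs hz
  -- coordinate bounds
  have e1 : |q.1 - p.1| ≤ W := by rw [hqe, hpe]; exact coord_bound b1 a1 w hb1 ha1
  have e2 : |r.2 - p.2| ≤ H := by rw [hre, hpe]; exact coord_bound c2 a2 h hc2 ha2
  have e3 : |q.2 - p.2| ≤ H := by rw [hqe, hpe]; exact coord_bound b2 a2 h hb2 ha2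
  have e4 : |r.1 - p.1| ≤ W := by rw [hre, hpe]; exact coord_bound c1 a1 w hc1 ha1
  -- perturbation bounds on differences
  obtain ⟨hp1l, hp1r⟩ := abs_le.mp hp'.1
  obtain ⟨hp2l, hp2r⟩ := abs_le.mp hp'.2
  obtain ⟨hq1l, hq1r⟩ := abs_le.mp hq'.1
  obtain ⟨hq2l, hq2r⟩ := abs_le.mp hq'.2
  obtain ⟨hr1l, hr1r⟩ := abs_le.mp hr'.1
  obtain ⟨hr2l, hr2r⟩ := abs_le.mp hr'.2
  have dX : |(q'.1 - p'.1) - (q.1 - p.1)| ≤ ε := abs_le.mpr ⟨by linarith, by linarith⟩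
  have dY : |(r'.2 - p'.2) - (r.2 - p.2)| ≤ ε := abs_le.mpr ⟨by linarith, by linarith⟩
  have dX2 : |(q'.2 - p'.2) - (q.2 - p.2)| ≤ ε := abs_le.mpr ⟨by linarith, by linarith⟩
  have dY2 : |(r'.1 - p'.1) - (r.1 - p.1)| ≤ ε := abs_le.mpr ⟨by linarith, by linarith⟩
  have t1 := prod_pert_bound (q.1 - p.1) (r.2 - p.2) (q'.1 - p'.1) (r'.2 - p'.2)
    W H ε e1 e2 dX dY hε.le hε1
  have t2 := prod_pert_bound (q.2 - p.2) (r.1 - p.1) (q'.2 - p'.2) (r'.1 - p'.1)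
    H W ε e3 e4 dX2 dY2 hε.le hε1
  set D' := orientDet p' q' r' with hD'
  have hE : |D' - D| ≤ 2 * (W + H + 1) * ε := by
    have hsplit : D' - D = ((q'.1 - p'.1) * (r'.2 - p'.2) - (q.1 - p.1) * (r.2 - p.2))
        - ((q'.2 - p'.2) * (r'.1 - p'.1) - (q.2 - p.2) * (r.1 - p.1)) := by
      simp only [hD', hD, orientDet]; ring
    obtain ⟨t1l, t1r⟩ := abs_le.mp t1
    obtain ⟨t2l, t2r⟩ := abs_le.mp t2
    rw [hsplit, abs_le]
    constructor <;> linarith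
  have h16 : ε * (16 * W ^ 3 * H ^ 3) ≤ 1 := (le_div_iff₀ (by linarith)).mp hεle
  have hWc : W ^ 3 ≤ W ^ 3 * H ^ 3 := le_mul_of_one_le_right (by positivity) hh3
  have hHc : H ^ 3 ≤ W ^ 3 * H ^ 3 := le_mul_of_one_le_left (by positivity) hw3
  have hWW : W ≤ W ^ 3 := by
    nlinarith [mul_nonneg (mul_nonneg (sub_nonneg.mpr hw1) (by linarith : (0 : ℝ) ≤ W + 1))
      (by linarith : (0 : ℝ) ≤ W)]
  have hHH : H ≤ H ^ 3 := by
    nlinarith [mul_nonneg (mul_nonneg (sub_nonneg.mpr hh1) (by linarith : (0 : ℝ) ≤ H + 1))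
      (by linarith : (0 : ℝ) ≤ H)]
  have kW : W ≤ W ^ 3 * H ^ 3 := hWW.trans hWc
  have kH : H ≤ W ^ 3 * H ^ 3 := hHH.trans hHc
  have k1 : (1 : ℝ) ≤ W ^ 3 * H ^ 3 := le_trans hw3 hWc
  have key : W + H + 1 ≤ 3 * (W ^ 3 * H ^ 3) := by linarith
  have hsmall : 2 * (W + H + 1) * ε ≤ 1 / 2 := by
    have hmul := mul_le_mul_of_nonneg_right key hε.le
    linarith
  obtain ⟨hEl, hEr⟩ := abs_le.mp hE
  rcases lt_or_gt_of_ne hDne with hneg | hpos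
  · have hD1 : D ≤ -1 := by
      have habs : |D| = -D := abs_of_neg hneg
      rw [habs] at hDabs; linarith
    have hD'neg : D' < 0 := by linarith
    refine ⟨?_, ne_of_lt hD'neg⟩
    simp only [orient, ← hD, ← hD']
    rw [Real.sign_of_neg hneg, Real.sign_of_neg hD'neg]
  · have hD1 : 1 ≤ D := by
      have habs : |D| = D := abs_of_pos hpos
      rw [habs] at hDabs; linarith
    have hD'pos : 0 < D' := by linarith
    refine ⟨?_, ne_of_gt hD'pos⟩
    simp only [orient, ← hD, ← hD']
    rw [Real.sign_of_pos hpos, Real.sign_of_pos hD'pos]
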